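/- Let D > 0 and T ≥ 1. For any deterministic online learning algorithm on the domain X = [−D, D], i.e., any family of maps A_t taking a sequence of loss functions (f_1, …, f_{t−1}) on [−D, D] to a prediction x_t ∈ [−D, D], there exists a sequence of loss functions f_1, …, f_T : [−D, D] → ℝ, each 1-Lipschitz and taking values in [0, D/2], such that Σ_{t=1}^T f_t(x_t) − inf_{x ∈ [−D,D]} Σ_{t=1}^T f_t(x) ≥ DT/4, where x_t = A_t(f_1, …, f_{t−1}). In particular, no deterministic algorithm achieves o(1) average regret for online non-convex learning. -/
import Mathlib


noncomputable section

/-- Adversarial losses: `f t x = max 0 (D/2 - |x - x_t|)` where `x_t` is the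
algorithm's prediction given the previous losses. -/
def losses (D : ℝ) (A : (t : ℕ) → (Fin t → ℝ → ℝ) → ℝ) : ℕ → ℝ → ℝ
  | t => fun x => max 0 (D / 2 - |x - A t (fun i => losses D A i.1)|)
decreasing_by exact i.2

lemma losses_def (D : ℝ) (A : (t : ℕ) → (Fin t → ℝ → ℝ) → ℝ) (t : ℕ) (x : ℝ) :
    losses D A t x = max 0 (D / 2 - |x - A t (fun i => losses D A i.1)|) := by
  rw [losses]

/-- Key pointwise bound: the two test points `-D/2` and `D/2` jointly incur
loss at most `D/2`. -/
lemma key_bound (D a : ℝ) (hD : 0 < D) :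
    max 0 (D / 2 - |(-(D/2)) - a|) + max 0 (D / 2 - |(D/2) - a|) ≤ D / 2 := by
  have h : |(-(D/2)) - a| + |(D/2) - a| ≥ D := by
    have := abs_sub_abs_le_abs_sub ((-(D/2)) - a) ((D/2) - a)
    have h2 := abs_sub ((-(D/2)) - a) ((D/2) - a)
    calc D = |((-(D/2)) - a) - ((D/2) - a)| := by
            rw [show ((-(D/2)) - a) - ((D/2) - a) = -D by ring, abs_neg, abs_of_pos hD]
      _ ≤ |(-(D/2)) - a| + |(D/2) - a| := abs_sub _ _
  rcases le_total (|(-(D/2)) - a|) (D/2) with h1 | h1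
  · have h2 : D / 2 - |(D/2) - a| ≤ 0 := by linarith
    have : max 0 (D / 2 - |(D/2) - a|) = 0 := max_eq_left h2
    rw [this]
    have : max 0 (D / 2 - |(-(D/2)) - a|) ≤ D / 2 := by
      apply max_le (by linarith)
      have := abs_nonneg ((-(D/2)) - a); linarith
    linarith
  · have h2 : D / 2 - |(-(D/2)) - a| ≤ 0 := by linarith
    have : max 0 (D / 2 - |(-(D/2)) - a|) = 0 := max_eq_left h2
    rw [this]
    have : max 0 (D / 2 - |(D/2) - a|) ≤ D / 2 := by
      apply max_le (by linarith)
      have := abs_nonneg ((D/2) - a); linarith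
    linarith

/-- **No deterministic algorithm achieves vanishing regret (Proposition 1).**
A deterministic online learning algorithm on `X = [-D, D]` is a family of maps
`A t : (Fin t → ℝ → ℝ) → ℝ` taking the previously observed losses `f_0, …, f_{t-1}`
to a prediction in `[-D, D]`. For any such algorithm there is a sequence of loss
functions on `[-D, D]`, each `1`-Lipschitz with values in `[0, D/2]`, forcing
regret at least `DT/4`. -/
theorem no_deterministic_algorithm (D : ℝ) (hD : 0 < D) (T : ℕ) (hT : 1 ≤ T)
    (A : (t : ℕ) → (Fin t → ℝ → ℝ) → ℝ)
    (hA : ∀ (t : ℕ) (fs : Fin t → ℝ → ℝ), A t fs ∈ Set.Icc (-D) D) :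
    ∃ f : ℕ → ℝ → ℝ,
      (∀ t < T, ∀ x ∈ Set.Icc (-D) D, ∀ y ∈ Set.Icc (-D) D,
        |f t x - f t y| ≤ 1 * |x - y|) ∧
      (∀ t < T, ∀ x ∈ Set.Icc (-D) D, f t x ∈ Set.Icc 0 (D / 2)) ∧
      (∑ t ∈ Finset.range T, f t (A t (fun i => f i.1))) -
          sInf ((fun x => ∑ t ∈ Finset.range T, f t x) '' Set.Icc (-D) D) ≥
        D * T / 4 := by
  set f := losses D A with hf
  refine ⟨f, ?_, ?_, ?_⟩
  · -- Lipschitz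
    intro t _ x _ y _
    rw [hf, losses_def, losses_def, one_mul]
    set a := A t (fun i => losses D A i.1)
    calc |max 0 (D / 2 - |x - a|) - max 0 (D / 2 - |y - a|)|
        ≤ |(D / 2 - |x - a|) - (D / 2 - |y - a|)| := by
          rw [max_comm 0 _, max_comm 0 _]; exact abs_max_sub_max_le_abs _ _ _
      _ = |(|y - a|) - (|x - a|)| := by ring_nf
      _ ≤ |(y - a) - (x - a)| := abs_abs_sub_abs_le_abs_sub _ _
      _ = |x - y| := by rw [show (y - a) - (x - a) = -(x - y) by ring, abs_neg]
  · -- range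
    intro t _ x _
    rw [hf, losses_def]
    constructor
    · exact le_max_left _ _
    · apply max_le (by linarith)
      have := abs_nonneg (x - A t (fun i => losses D A i.1)); linarith
  · -- regret
    have hself : ∀ t, f t (A t (fun i => f i.1)) = D / 2 := by
      intro t
      rw [hf, losses_def, sub_self, abs_zero, sub_zero]
      exact max_eq_right (by linarith)
    have hsum1 : (∑ t ∈ Finset.range T, f t (A t (fun i => f i.1))) = T * (D / 2) := by
      simp [hself]
    have hkey : ∀ t, f t (-(D/2)) + f t (D/2) ≤ D / 2 := by
      intro t
      rw [hf, losses_def, losses_def]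
      exact key_bound D _ hD
    have hsum2 : (∑ t ∈ Finset.range T, f t (-(D/2))) + (∑ t ∈ Finset.range T, f t (D/2))
        ≤ T * (D / 2) := by
      rw [← Finset.sum_add_distrib]
      calc ∑ t ∈ Finset.range T, (f t (-(D/2)) + f t (D/2))
          ≤ ∑ _t ∈ Finset.range T, D / 2 := Finset.sum_le_sum (fun t _ => hkey t)
        _ = T * (D / 2) := by simp [mul_comm]
    -- sInf is at most min of the two sums
    have hmem1 : (-(D/2)) ∈ Set.Icc (-D) D := by constructor <;> linarith
    have hmem2 : (D/2) ∈ Set.Icc (-D) D := by constructor <;> linarith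
    have hbdd : BddBelow ((fun x => ∑ t ∈ Finset.range T, f t x) '' Set.Icc (-D) D) := by
      refine ⟨0, ?_⟩
      rintro y ⟨x, _, rfl⟩
      apply Finset.sum_nonneg
      intro t _
      rw [hf, losses_def]
      exact le_max_left _ _
    have hle1 : sInf ((fun x => ∑ t ∈ Finset.range T, f t x) '' Set.Icc (-D) D)
        ≤ ∑ t ∈ Finset.range T, f t (-(D/2)) := csInf_le hbdd ⟨_, hmem1, rfl⟩
    have hle2 : sInf ((fun x => ∑ t ∈ Finset.range T, f t x) '' Set.Icc (-D) D)
        ≤ ∑ t ∈ Finset.range T, f t (D/2) := csInf_le hbdd ⟨_, hmem2, rfl⟩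
    have hinf : sInf ((fun x => ∑ t ∈ Finset.range T, f t x) '' Set.Icc (-D) D)
        ≤ T * (D / 4) := by nlinarith
    rw [hsum1]
    have : (T : ℝ) * (D / 2) - T * (D / 4) = D * T / 4 := by ring
    linarith
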